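/- Let $0 < \gamma < 1$. For every real number $\tau$ with $0 < \tau \leq 1$, $e^{-\tau} \int_0^{\tau} e^{\gamma s} \left(1 - e^{-2(\tau - s)}\right)^{-\frac{1+\gamma}{2}} ds \leq \frac{2}{1-\gamma} \left(1 - e^{-2}\right)^{-\frac{1+\gamma}{2}} \tau^{\frac{1-\gamma}{2}} e^{-(1-\gamma)\tau}$. -/

import Mathlib

open Real MeasureTheory

/-- For `0 < γ < 1` and `0 < τ ≤ 1`,
`e^(-τ) ∫₀^τ e^(γ s) (1 - e^(-2(τ-s)))^(-(1+γ)/2) ds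
  ≤ (2/(1-γ)) (1 - e^(-2))^(-(1+γ)/2) τ^((1-γ)/2) e^(-(1-γ)τ)`. -/
theorem stmt_6 (γ : ℝ) (hγ0 : 0 < γ) (hγ1 : γ < 1) (τ : ℝ) (hτ0 : 0 < τ) (hτ1 : τ ≤ 1) :
    Real.exp (-τ) *
        ∫ s in (0:ℝ)..τ, Real.exp (γ * s) * (1 - Real.exp (-2 * (τ - s))) ^ (-(1 + γ) / 2)
      ≤ (2 / (1 - γ)) * (1 - Real.exp (-2)) ^ (-(1 + γ) / 2) * τ ^ ((1 - γ) / 2) *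
          Real.exp (-(1 - γ) * τ) := by
  have hexp2 : Real.exp (-2) < 1 := Real.exp_lt_one_iff.mpr (by norm_num)
  have hC : (0:ℝ) < 1 - Real.exp (-2) := by linarith
  set p : ℝ := -(1 + γ) / 2 with hpdef
  have hp1 : -1 < p := by rw [hpdef]; linarith
  have hp0 : p < 0 := by rw [hpdef]; linarith
  have hps : p + 1 = (1 - γ) / 2 := by rw [hpdef]; ring
  -- concavity bound
  have key : ∀ u : ℝ, 0 ≤ u → u ≤ 1 → (1 - Real.exp (-2)) * u ≤ 1 - Real.exp (-2 * u) := by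
    intro u hu0 hu1
    have h := convexOn_exp.2 (Set.mem_univ (0:ℝ)) (Set.mem_univ (-2:ℝ))
      (by linarith : (0:ℝ) ≤ 1 - u) hu0 (by ring)
    simp only [smul_eq_mul, mul_zero, zero_add, Real.exp_zero, mul_one] at h
    have h2 : u * -2 = -2 * u := by ring
    rw [h2] at h
    nlinarith
  -- pointwise bound on [0, τ]
  have hbd : ∀ s ∈ Set.Icc (0:ℝ) τ,
      Real.exp (γ * s) * (1 - Real.exp (-2 * (τ - s))) ^ p
        ≤ Real.exp (γ * τ) * ((1 - Real.exp (-2)) ^ p * (τ - s) ^ p) := by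
    intro s hs
    obtain ⟨hs0, hsτ⟩ := hs
    have he : Real.exp (γ * s) ≤ Real.exp (γ * τ) :=
      Real.exp_le_exp.mpr (by nlinarith)
    rcases eq_or_lt_of_le hsτ with h | h
    · subst h
      simp [Real.zero_rpow (ne_of_lt hp0), sub_self]
    · have hu0 : 0 < τ - s := by linarith
      have hu1 : τ - s ≤ 1 := by linarith
      have hk := key (τ - s) hu0.le hu1
      have hbase : 0 < (1 - Real.exp (-2)) * (τ - s) := by positivity
      have h1 : (1 - Real.exp (-2 * (τ - s))) ^ p
          ≤ ((1 - Real.exp (-2)) * (τ - s)) ^ p :=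
        Real.rpow_le_rpow_of_nonpos hbase hk hp0.le
      rw [Real.mul_rpow hC.le hu0.le] at h1
      have hpos : 0 ≤ (1 - Real.exp (-2)) ^ p * (τ - s) ^ p := by positivity
      have hnn : 0 ≤ (1 - Real.exp (-2 * (τ - s))) ^ p := by
        apply Real.rpow_nonneg
        have : Real.exp (-2 * (τ - s)) < 1 := Real.exp_lt_one_iff.mpr (by nlinarith)
        linarith
      calc Real.exp (γ * s) * (1 - Real.exp (-2 * (τ - s))) ^ p
          ≤ Real.exp (γ * τ) * (1 - Real.exp (-2 * (τ - s))) ^ p := by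
            exact mul_le_mul_of_nonneg_right he hnn
        _ ≤ Real.exp (γ * τ) * ((1 - Real.exp (-2)) ^ p * (τ - s) ^ p) := by
            exact mul_le_mul_of_nonneg_left h1 (Real.exp_nonneg _)
  -- integrability of g
  have hgint : IntervalIntegrable
      (fun s => Real.exp (γ * τ) * ((1 - Real.exp (-2)) ^ p * (τ - s) ^ p))
      volume 0 τ := by
    have h1 : IntervalIntegrable (fun x : ℝ => x ^ p) volume 0 τ :=
      intervalIntegral.intervalIntegrable_rpow' hp1
    have h2 := (h1.comp_sub_left τ).symm
    simp only [sub_zero, sub_self] at h2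
    exact (h2.const_mul _).const_mul _
  -- measurability of f
  have hfm : AEStronglyMeasurable
      (fun s => Real.exp (γ * s) * (1 - Real.exp (-2 * (τ - s))) ^ p)
      (volume.restrict (Set.uIoc (0:ℝ) τ)) := by
    apply Measurable.aestronglyMeasurable
    exact (Real.measurable_exp.comp (measurable_const.mul measurable_id)).mul
      ((measurable_const.sub (Real.measurable_exp.comp
        (measurable_const.mul (measurable_const.sub measurable_id)))).pow measurable_const)
  -- integrability of f
  have hfint : IntervalIntegrable
      (fun s => Real.exp (γ * s) * (1 - Real.exp (-2 * (τ - s))) ^ p) volume 0 τ := by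
    apply hgint.mono_fun hfm
    rw [Set.uIoc_of_le hτ0.le]
    refine (ae_restrict_iff' measurableSet_Ioc).mpr (Filter.Eventually.of_forall ?_)
    intro s hs
    have hs' : s ∈ Set.Icc (0:ℝ) τ := ⟨hs.1.le, hs.2⟩
    have hnn : 0 ≤ (1 - Real.exp (-2 * (τ - s))) ^ p := by
      apply Real.rpow_nonneg
      have h' : Real.exp (-2 * (τ - s)) ≤ 1 := by
        rw [Real.exp_le_one_iff]; nlinarith [hs.2]
      linarith
    have hfnn : 0 ≤ Real.exp (γ * s) * (1 - Real.exp (-2 * (τ - s))) ^ p := by positivity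
    have hgnn : 0 ≤ Real.exp (γ * τ) * ((1 - Real.exp (-2)) ^ p * (τ - s) ^ p) := by
      have : 0 ≤ (τ - s) ^ p := Real.rpow_nonneg (by linarith [hs.2]) _
      positivity
    dsimp only
    rw [Real.norm_of_nonneg hfnn, Real.norm_of_nonneg hgnn]
    exact hbd s hs'
  -- integral comparison
  have hmono := intervalIntegral.integral_mono_on hτ0.le hfint hgint hbd
  -- compute ∫ g
  have hcalc : (∫ s in (0:ℝ)..τ,
      Real.exp (γ * τ) * ((1 - Real.exp (-2)) ^ p * (τ - s) ^ p))
      = Real.exp (γ * τ) * ((1 - Real.exp (-2)) ^ p * (τ ^ (p+1) / (p+1))) := by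
    rw [intervalIntegral.integral_const_mul, intervalIntegral.integral_const_mul]
    congr 1
    congr 1
    have := intervalIntegral.integral_comp_sub_left (fun x : ℝ => x ^ p) τ (a := 0) (b := τ)
    simp only [sub_zero, sub_self] at this
    rw [this, integral_rpow (Or.inl hp1),
      Real.zero_rpow (show p + 1 ≠ 0 by rw [hps]; exact div_ne_zero (by linarith) two_ne_zero)]
    ring
  rw [hcalc] at hmono
  have hineq : Real.exp (-τ) *
      (∫ s in (0:ℝ)..τ, Real.exp (γ * s) * (1 - Real.exp (-2 * (τ - s))) ^ p)
      ≤ Real.exp (-τ) * (Real.exp (γ * τ) * ((1 - Real.exp (-2)) ^ p * (τ ^ (p+1) / (p+1)))) :=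
    mul_le_mul_of_nonneg_left hmono (Real.exp_nonneg _)
  refine hineq.trans_eq ?_
  have hE : Real.exp (-(1 - γ) * τ) = Real.exp (-τ) * Real.exp (γ * τ) := by
    rw [← Real.exp_add]; ring_nf
  rw [hps, hE]
  have h1γ : (0:ℝ) < 1 - γ := by linarith
  field_simp
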